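/- arXiv:1609.09476 — 3 statements merged into one kernel-verified Lean document; each statement's English description precedes it below -/
import Mathlib

section
/- The Jacobi triple product identity: as formal power series (or for |q| < 1, z ≠ 0), ∏_{n=1}^∞ (1 + z q^n)(1 + z^{-1} q^{n-1})(1 - q^n) = ∑_{j=-∞}^∞ z^j q^{binom(j+1,2)}. -/
open Finset

namespace JTP

/-- Gaussian binomial coefficient via q-Pascal recursion. -/
def qb (q : ℂ) : ℕ → ℕ → ℂ
  | 0, 0 => 1
  | 0, _+1 => 0
  | N+1, 0 => 1
  | N+1, k+1 => qb q N (k+1) + q ^ (N-k) * qb q N k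

lemma qb_zero_right (q : ℂ) (N : ℕ) : qb q N 0 = 1 := by cases N <;> rfl

lemma qb_eq_zero (q : ℂ) {N k : ℕ} (h : N < k) : qb q N k = 0 := by
  induction N generalizing k with
  | zero => obtain ⟨k, rfl⟩ := Nat.exists_eq_add_of_lt h; simp [qb, Nat.add_comm]
  | succ N ih =>
    obtain ⟨m, rfl⟩ : ∃ m, k = m + 1 := ⟨k - 1, by omega⟩
    rw [qb, ih (by omega), ih (by omega), mul_zero, add_zero]

/-- triangular number -/
def T (k : ℕ) : ℕ := ∑ i ∈ range k, i

lemma T_succ (k : ℕ) : T (k+1) = T k + k := Finset.sum_range_succ _ _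

/-- Cauchy binomial theorem. -/
lemma cauchy (q w : ℂ) (N : ℕ) :
    ∏ m ∈ range N, (1 + w * q ^ m)
      = ∑ k ∈ range (N+1), qb q N k * q ^ (T k) * w ^ k := by
  induction N with
  | zero => simp [qb, T]
  | succ N ih =>
    rw [Finset.prod_range_succ, ih, mul_add, mul_one]
    have expand2 : (∑ k ∈ range (N+1), qb q N k * q ^ T k * w ^ k) * (w * q ^ N)
        = ∑ k ∈ range (N+1), q ^ (N - k) * qb q N k * q ^ T (k+1) * w ^ (k+1) := by
      rw [Finset.sum_mul]
      refine Finset.sum_congr rfl fun k hk => ?_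
      have hkN : k ≤ N := Nat.lt_succ_iff.mp (Finset.mem_range.mp hk)
      have hq : q ^ (N - k) * q ^ T (k+1) = q ^ T k * q ^ N := by
        rw [← pow_add, ← pow_add, T_succ]; congr 1; omega
      calc qb q N k * q ^ T k * w ^ k * (w * q ^ N)
          = qb q N k * (q ^ T k * q ^ N) * w ^ (k+1) := by ring
        _ = q ^ (N - k) * qb q N k * q ^ T (k+1) * w ^ (k+1) := by rw [← hq]; ring
    rw [expand2]
    have ext1 : (∑ k ∈ range (N+1), qb q N k * q ^ T k * w ^ k)
        = ∑ k ∈ range (N+2), qb q N k * q ^ T k * w ^ k := by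
      rw [Finset.sum_range_succ (fun k => qb q N k * q ^ T k * w ^ k) (N+1),
        qb_eq_zero q (Nat.lt_succ_self N), zero_mul, zero_mul, add_zero]
    rw [ext1, Finset.sum_range_succ' (fun k => qb q N k * q ^ T k * w ^ k) (N+1),
      Finset.sum_range_succ' (fun k => qb q (N+1) k * q ^ T k * w ^ k) (N+1),
      qb_zero_right, qb_zero_right, add_right_comm, ← Finset.sum_add_distrib]
    congr 1
    refine Finset.sum_congr rfl fun k hk => ?_
    show qb q N (k+1) * q ^ T (k+1) * w ^ (k+1) + q ^ (N-k) * qb q N k * q ^ T (k+1) * w ^ (k+1)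
      = qb q (N+1) (k+1) * q ^ T (k+1) * w ^ (k+1)
    rw [qb]; ring

end JTP

namespace JTP

/-- partial products of (1-q^(m+1)) -/
def dd (q : ℂ) (n : ℕ) : ℂ := ∏ m ∈ range n, (1 - q ^ (m+1))

lemma dd_zero (q : ℂ) : dd q 0 = 1 := rfl

lemma dd_succ (q : ℂ) (n : ℕ) : dd q (n+1) = dd q n * (1 - q ^ (n+1)) :=
  Finset.prod_range_succ _ _

lemma qb_diag (q : ℂ) : ∀ N, qb q N N = 1 := by
  intro N
  induction N with
  | zero => rfl
  | succ N ih => rw [qb, qb_eq_zero q (Nat.lt_succ_self N), Nat.sub_self, pow_zero, ih]; ring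

lemma qb_dd (q : ℂ) : ∀ N, ∀ k ≤ N, qb q N k * (dd q k * dd q (N-k)) = dd q N := by
  intro N
  induction N with
  | zero => intro k hk; interval_cases k; simp [qb, dd]
  | succ N ih =>
    intro k hk
    match k with
    | 0 => simp [qb_zero_right, dd_zero]
    | k+1 =>
      rcases Nat.lt_or_ge (k+1) (N+1) with h | h
      · have hd3 : dd q (N-k) = dd q (N-(k+1)) * (1 - q ^ (N-k)) := by
          have h1 : N - k = (N-(k+1)) + 1 := by omega
          rw [h1, dd_succ]
        have IH1 := ih (k+1) (by omega)
        have IH2 := ih k (by omega)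
        rw [hd3] at IH2
        rw [dd_succ q k] at IH1
        have hpow : q ^ (N-k) * q ^ (k+1) = q ^ (N+1) := by rw [← pow_add]; congr 1; omega
        rw [qb, Nat.succ_sub_succ, hd3, dd_succ q k, dd_succ q N]
        linear_combination (1 - q^(N-k)) * IH1 + q^(N-k) * (1 - q^(k+1)) * IH2 - dd q N * hpow
      · have hkN : k = N := by omega
        subst hkN
        rw [qb, qb_eq_zero q (Nat.lt_succ_self k), Nat.sub_self, pow_zero, qb_diag,
          Nat.sub_self, dd_zero]
        ring

end JTP

namespace JTP

lemma T_int (n : ℕ) : 2 * (T n : ℤ) = n * (n - 1) := by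
  cases n with
  | zero => rfl
  | succ n =>
    have h := Finset.sum_range_id_mul_two (n+1)
    have h2 : T (n+1) * 2 = (n+1) * n := by simpa [T] using h
    have := congrArg (Nat.cast : ℕ → ℤ) h2
    push_cast at this
    push_cast
    linarith

lemma prod_zpow_sum {α : Type*} (q : ℂ) (hq : q ≠ 0) (s : Finset α) (f : α → ℤ) :
    ∏ a ∈ s, q ^ f a = q ^ (∑ a ∈ s, f a) := by
  induction s using Finset.cons_induction with
  | empty => simp
  | cons a s ha ih => rw [Finset.prod_cons, Finset.sum_cons, ih, zpow_add₀ hq]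

lemma exponent_eq (n k : ℕ) :
    (T n : ℤ) + T k + (1 - n) * k = ((k:ℤ) - n) * (((k:ℤ) - n) + 1) / 2 := by
  obtain ⟨c, hc⟩ := Int.even_mul_succ_self ((k:ℤ) - n)
  have h2 : ((k:ℤ) - n) * (((k:ℤ) - n) + 1) / 2 = c := by rw [hc]; omega
  rw [h2]
  apply mul_left_cancel₀ (two_ne_zero : (2:ℤ) ≠ 0)
  have hn := T_int n
  have hk := T_int k
  linear_combination hn + hk + hc

lemma hsplit (q z : ℂ) (hq : q ≠ 0) (hz : z ≠ 0) (n : ℕ) :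
    ∏ m ∈ range (2*n), (1 + z * q ^ (1 - (n:ℤ)) * q ^ m)
      = (z ^ n * q ^ (-(T n : ℤ)))
        * ∏ m ∈ range n, ((1 + z * q ^ (m+1)) * (1 + z⁻¹ * q ^ m)) := by
  rw [two_mul, Finset.prod_range_add, Finset.prod_mul_distrib]
  have hblock2 : ∏ m ∈ range n, (1 + z * q ^ (1 - (n:ℤ)) * q ^ (n + m))
      = ∏ m ∈ range n, (1 + z * q ^ (m+1)) := by
    refine Finset.prod_congr rfl fun m _ => ?_
    congr 1
    rw [mul_assoc, ← zpow_natCast q (n+m), ← zpow_add₀ hq, ← zpow_natCast q (m+1)]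
    congr 1
    push_cast; ring
  have hblock1 : ∏ m ∈ range n, (1 + z * q ^ (1 - (n:ℤ)) * q ^ m)
      = z ^ n * q ^ (-(T n : ℤ)) * ∏ m ∈ range n, (1 + z⁻¹ * q ^ m) := by
    have step1 : ∀ m ∈ range n,
        (1 + z * q ^ (1 - (n:ℤ)) * q ^ m)
          = z * q ^ ((m:ℤ) + 1 - n) * (1 + z⁻¹ * q ^ (n - 1 - m)) := by
      intro m hm
      have hmn : m < n := Finset.mem_range.mp hm
      have e1 : z * q ^ (1 - (n:ℤ)) * q ^ m = z * q ^ ((m:ℤ) + 1 - n) := by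
        rw [mul_assoc, ← zpow_natCast q m, ← zpow_add₀ hq]
        ring_nf
      have e2 : z * q ^ ((m:ℤ) + 1 - n) * (z⁻¹ * q ^ (n - 1 - m)) = 1 := by
        rw [← zpow_natCast q (n - 1 - m)]
        have hcast : ((n - 1 - m : ℕ) : ℤ) = (n:ℤ) - 1 - m := by omega
        rw [hcast]
        rw [mul_mul_mul_comm, mul_inv_cancel₀ hz, ← zpow_add₀ hq]
        have hz0 : (m:ℤ) + 1 - n + ((n:ℤ) - 1 - m) = 0 := by ring
        rw [hz0, zpow_zero, one_mul]
      rw [mul_add, mul_one, e2, ← e1]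
      ring
    rw [Finset.prod_congr rfl step1, Finset.prod_mul_distrib, Finset.prod_mul_distrib,
      Finset.prod_const, Finset.card_range, prod_zpow_sum q hq,
      Finset.prod_range_reflect (fun m => 1 + z⁻¹ * q ^ m) n]
    congr 2
    rw [Finset.sum_congr rfl (fun m _ => by ring : ∀ m ∈ range n, (m:ℤ) + 1 - n = (m:ℤ) + (1 - n)),
      Finset.sum_add_distrib, Finset.sum_const, Finset.card_range, nsmul_eq_mul]
    have hTn : ∑ m ∈ range n, (m:ℤ) = (T n : ℤ) := by
      rw [T]; push_cast; rfl
    rw [hTn]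
    congr 1
    have := T_int n
    linear_combination this
  rw [hblock1, hblock2]
  ring

end JTP

namespace JTP

lemma finite_jacobi_range (q z : ℂ) (hq : q ≠ 0) (hz : z ≠ 0) (n : ℕ) :
    ∏ m ∈ range n, ((1 + z * q ^ (m+1)) * (1 + z⁻¹ * q ^ m))
      = ∑ k ∈ range (2*n+1), qb q (2*n) k * z ^ ((k:ℤ) - n)
          * q ^ ((((k:ℤ) - n) * (((k:ℤ) - n) + 1)) / 2) := by
  have hc := cauchy q (z * q ^ (1 - (n:ℤ))) (2*n)
  rw [hsplit q z hq hz n] at hc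
  have hG : ∏ m ∈ range n, ((1 + z * q ^ (m+1)) * (1 + z⁻¹ * q ^ m))
      = (z ^ (-(n:ℤ)) * q ^ ((T n : ℤ)))
        * ∑ k ∈ range (2*n+1), qb q (2*n) k * q ^ (T k) * (z * q ^ (1 - (n:ℤ))) ^ k := by
    rw [← hc]
    rw [← mul_assoc]
    have : z ^ (-(n:ℤ)) * q ^ ((T n : ℤ)) * (z ^ n * q ^ (-(T n : ℤ))) = 1 := by
      rw [← zpow_natCast z n, mul_mul_mul_comm, ← zpow_add₀ hz, ← zpow_add₀ hq]
      simp
    rw [this, one_mul]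
  rw [hG, Finset.mul_sum]
  refine Finset.sum_congr rfl fun k hk => ?_
  have hwk : (z * q ^ (1 - (n:ℤ))) ^ k = z ^ (k:ℤ) * q ^ ((1 - (n:ℤ)) * k) := by
    rw [mul_pow, ← zpow_natCast z k, ← zpow_natCast (q ^ (1 - (n:ℤ))) k, ← zpow_mul]
  rw [hwk]
  have hzz : z ^ (-(n:ℤ)) * z ^ (k:ℤ) = z ^ ((k:ℤ) - n) := by
    rw [← zpow_add₀ hz]; congr 1; ring
  have hqq : q ^ ((T n : ℤ)) * (q ^ (T k : ℕ) * q ^ ((1 - (n:ℤ)) * k))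
      = q ^ ((((k:ℤ) - n) * (((k:ℤ) - n) + 1)) / 2) := by
    rw [← zpow_natCast q (T k), ← zpow_add₀ hq, ← zpow_add₀ hq, ← exponent_eq n k]
    congr 1
    ring
  calc z ^ (-(n:ℤ)) * q ^ ((T n : ℤ)) * (qb q (2*n) k * q ^ (T k) * (z ^ (k:ℤ) * q ^ ((1 - (n:ℤ)) * k)))
      = qb q (2*n) k * (z ^ (-(n:ℤ)) * z ^ (k:ℤ))
          * (q ^ ((T n : ℤ)) * (q ^ (T k : ℕ) * q ^ ((1 - (n:ℤ)) * k))) := by ring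
    _ = _ := by rw [hzz, hqq]

lemma finite_jacobi (q z : ℂ) (hq : q ≠ 0) (hz : z ≠ 0) (n : ℕ) :
    ∏ m ∈ range n, ((1 + z * q ^ (m+1)) * (1 + z⁻¹ * q ^ m))
      = ∑ j ∈ Finset.Icc (-(n:ℤ)) n, qb q (2*n) (j + n).toNat * z ^ j
          * q ^ ((j * (j + 1)) / 2) := by
  rw [finite_jacobi_range q z hq hz n]
  have e : Function.Injective (fun k : ℕ => (k:ℤ) - n) := by
    intro a b hab; simpa using hab
  have hmap : Finset.Icc (-(n:ℤ)) n = (range (2*n+1)).map ⟨fun k : ℕ => (k:ℤ) - n, e⟩ := by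
    ext j
    simp only [Finset.mem_Icc, Finset.mem_map, Finset.mem_range, Function.Embedding.coeFn_mk]
    constructor
    · intro h; exact ⟨(j + n).toNat, by omega, by omega⟩
    · rintro ⟨k, hk, rfl⟩; omega
  rw [hmap, Finset.sum_map]
  refine Finset.sum_congr rfl fun k hk => ?_
  simp only [Function.Embedding.coeFn_mk]
  have ht : ((k:ℤ) - n + n).toNat = k := by omega
  rw [ht]

end JTP

namespace JTP

section Bounds

variable {q : ℂ}

lemma sum_pow_le (hq : ‖q‖ < 1) (n : ℕ) : ∑ m ∈ range n, ‖q‖ ^ (m+1) ≤ ‖q‖ / (1 - ‖q‖) := by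
  have hr0 : (0:ℝ) ≤ ‖q‖ := norm_nonneg q
  have hsummable : Summable (fun m : ℕ => ‖q‖ * ‖q‖ ^ m) :=
    (summable_geometric_of_lt_one hr0 hq).mul_left _
  have h1 : ∑ m ∈ range n, ‖q‖ ^ (m+1) = ∑ m ∈ range n, ‖q‖ * ‖q‖ ^ m :=
    Finset.sum_congr rfl fun m _ => by ring
  rw [h1, div_eq_mul_inv, ← tsum_geometric_of_lt_one hr0 hq, ← tsum_mul_left]
  exact hsummable.sum_le_tsum _ (fun i _ => by positivity)

lemma dd_norm_le (hq : ‖q‖ < 1) (n : ℕ) : ‖dd q n‖ ≤ Real.exp (‖q‖ / (1 - ‖q‖)) := by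
  rw [dd, norm_prod]
  calc ∏ m ∈ range n, ‖1 - q ^ (m+1)‖
      ≤ ∏ m ∈ range n, Real.exp (‖q‖ ^ (m+1)) := by
        refine Finset.prod_le_prod (fun m _ => norm_nonneg _) fun m _ => ?_
        calc ‖1 - q ^ (m+1)‖ ≤ ‖(1:ℂ)‖ + ‖q ^ (m+1)‖ := norm_sub_le _ _
          _ = ‖q‖ ^ (m+1) + 1 := by rw [norm_one, norm_pow]; ring
          _ ≤ Real.exp (‖q‖ ^ (m+1)) := Real.add_one_le_exp _
    _ = Real.exp (∑ m ∈ range n, ‖q‖ ^ (m+1)) := (Real.exp_sum _ _).symm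
    _ ≤ Real.exp (‖q‖ / (1 - ‖q‖)) := Real.exp_le_exp.mpr (sum_pow_le hq n)

lemma le_dd_norm (hq : ‖q‖ < 1) (n : ℕ) :
    Real.exp (-(‖q‖ / (1 - ‖q‖) / (1 - ‖q‖))) ≤ ‖dd q n‖ := by
  have hr0 : (0:ℝ) ≤ ‖q‖ := norm_nonneg q
  have h1r : (0:ℝ) < 1 - ‖q‖ := by linarith
  rw [dd, norm_prod]
  have key : ∀ m ∈ range n, Real.exp (-(‖q‖ ^ (m+1) / (1 - ‖q‖))) ≤ ‖1 - q ^ (m+1)‖ := by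
    intro m _
    have hpow1 : ‖q‖ ^ (m+1) < 1 := pow_lt_one₀ hr0 hq (Nat.succ_ne_zero m)
    have hpownn : (0:ℝ) ≤ ‖q‖ ^ (m+1) := by positivity
    have hne : (0:ℝ) < 1 - ‖q‖ ^ (m+1) := by linarith
    have h2 : (1 - ‖q‖ ^ (m+1))⁻¹ ≤ Real.exp (‖q‖ ^ (m+1) / (1 - ‖q‖)) := by
      have hx : ‖q‖ ^ (m+1) / (1 - ‖q‖ ^ (m+1)) + 1 ≤ Real.exp (‖q‖ ^ (m+1) / (1 - ‖q‖)) := by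
        refine le_trans ?_ (Real.add_one_le_exp _)
        have hd : ‖q‖ ^ (m+1) / (1 - ‖q‖ ^ (m+1)) ≤ ‖q‖ ^ (m+1) / (1 - ‖q‖) := by
          apply div_le_div_of_nonneg_left hpownn h1r
          have hple : ‖q‖ ^ (m+1) ≤ ‖q‖ := pow_le_of_le_one hr0 hq.le (Nat.succ_ne_zero m)
          linarith
        linarith
      have heq : ‖q‖ ^ (m+1) / (1 - ‖q‖ ^ (m+1)) + 1 = (1 - ‖q‖ ^ (m+1))⁻¹ := by
        rw [inv_eq_one_div, div_add' _ _ _ hne.ne']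
        congr 1
        ring
      linarith
    have h3 : Real.exp (-(‖q‖ ^ (m+1) / (1 - ‖q‖))) ≤ 1 - ‖q‖ ^ (m+1) := by
      rw [Real.exp_neg, inv_le_comm₀ (Real.exp_pos _) hne]
      exact h2
    refine h3.trans ?_
    have h4 := norm_sub_norm_le (1:ℂ) (q ^ (m+1))
    rw [norm_one, norm_pow] at h4
    linarith
  calc Real.exp (-(‖q‖ / (1 - ‖q‖) / (1 - ‖q‖)))
      ≤ Real.exp (-((∑ m ∈ range n, ‖q‖ ^ (m+1)) / (1 - ‖q‖))) := by
        rw [Real.exp_le_exp, neg_le_neg_iff]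
        exact div_le_div_of_nonneg_right (sum_pow_le hq n) h1r.le
    _ = ∏ m ∈ range n, Real.exp (-(‖q‖ ^ (m+1) / (1 - ‖q‖))) := by
        rw [← Real.exp_sum, Finset.sum_neg_distrib, Finset.sum_div]
    _ ≤ ∏ m ∈ range n, ‖1 - q ^ (m+1)‖ :=
        Finset.prod_le_prod (fun m _ => (Real.exp_pos _).le) key

lemma dd_ne_zero (hq : ‖q‖ < 1) (n : ℕ) : dd q n ≠ 0 := by
  have := (Real.exp_pos (-(‖q‖ / (1 - ‖q‖) / (1 - ‖q‖)))).trans_le (le_dd_norm hq n)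
  exact norm_pos_iff.mp this

end Bounds

end JTP

namespace JTP

open Filter Topology

lemma hasProd_zero_of_exists_zero (f : ℕ → ℂ) (h : ∃ b, f b = 0) : HasProd f 0 := by
  obtain ⟨b, hb⟩ := h
  have hev : ∀ᶠ s : Finset ℕ in atTop, ∏ i ∈ s, f i = 0 := by
    filter_upwards [Filter.eventually_ge_atTop ({b} : Finset ℕ)] with s hs
    exact Finset.prod_eq_zero (hs (Finset.mem_singleton_self b)) hb
  exact Tendsto.congr' (hev.mono fun s hs => hs.symm) tendsto_const_nhds

lemma tendsto_partial_prods (f : ℕ → ℂ) (hs : Summable fun m => f m - 1) :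
    Tendsto (fun n => ∏ m ∈ range n, f m) atTop (𝓝 (∏' m, f m)) := by
  by_cases hzero : ∃ b, f b = 0
  · obtain ⟨b, hb⟩ := hzero
    rw [(hasProd_zero_of_exists_zero f ⟨b, hb⟩).tprod_eq]
    have hev : ∀ᶠ n : ℕ in atTop, ∏ m ∈ range n, f m = 0 := by
      filter_upwards [Filter.eventually_ge_atTop (b+1)] with n hn
      exact Finset.prod_eq_zero (Finset.mem_range.mpr (by omega)) hb
    exact Tendsto.congr' (hev.mono fun s h => h.symm) tendsto_const_nhds
  · push_neg at hzero
    have hnorm : Summable fun m => ‖f m - 1‖ := hs.norm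
    have hlog : Summable fun m => Complex.log (f m) := by
      apply Summable.of_norm_bounded_eventually (g := fun m => 3/2 * ‖f m - 1‖)
        (hnorm.mul_left _)
      have htend : Tendsto (fun m => ‖f m - 1‖) atTop (𝓝 0) := hnorm.tendsto_atTop_zero
      rw [Nat.cofinite_eq_atTop]
      filter_upwards [htend.eventually_le_const (by norm_num : (0:ℝ) < 1/2)] with m hm
      have h1 := Complex.norm_log_one_add_half_le_self (z := f m - 1) (by linarith)
      have h2 : 1 + (f m - 1) = f m := by ring
      rw [h2] at h1
      exact h1
    have hmult : Multipliable f :=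
      Complex.multipliable_of_summable_log hlog
    exact hmult.hasProd.tendsto_prod_nat

end JTP

namespace JTP

open Filter Topology

lemma tri_succ (j : ℤ) : (j+1)*(j+1+1)/2 = j*(j+1)/2 + (j+1) := by
  obtain ⟨a, ha⟩ := Int.even_mul_succ_self j
  obtain ⟨b, hb⟩ := Int.even_mul_succ_self (j+1)
  have h1 : (j+1)*(j+1+1) = j*(j+1) + 2*(j+1) := by ring
  rw [ha, hb] at h1
  rw [ha, hb]
  omega

lemma tri_neg (j : ℤ) : (-(j+1))*(-(j+1)+1)/2 = (-j)*(-j+1)/2 + j := by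
  obtain ⟨a, ha⟩ := Int.even_mul_succ_self (-(j+1))
  obtain ⟨b, hb⟩ := Int.even_mul_succ_self (-j)
  have h1 : (-(j+1))*(-(j+1)+1) = (-j)*(-j+1) + 2*j := by ring
  rw [ha, hb] at h1
  rw [ha, hb]
  omega

lemma summable_bound {q z : ℂ} (hq : ‖q‖ < 1) (hq0 : q ≠ 0) (hz : z ≠ 0) (K : ℝ) :
    Summable (fun j : ℤ => K * (‖z‖ ^ j * ‖q‖ ^ (j * (j + 1) / 2))) := by
  apply Summable.mul_left
  have hr0 : (0:ℝ) < ‖q‖ := norm_pos_iff.mpr hq0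
  have hz0 : (0:ℝ) < ‖z‖ := norm_pos_iff.mpr hz
  set u : ℤ → ℝ := fun j => ‖z‖ ^ j * ‖q‖ ^ (j * (j + 1) / 2) with hu
  have hupos : ∀ j, 0 < u j := fun j => by
    apply mul_pos (zpow_pos hz0 _) (zpow_pos hr0 _)
  have htendq : Tendsto (fun n : ℕ => ‖q‖ ^ n) atTop (𝓝 0) :=
    tendsto_pow_atTop_nhds_zero_of_lt_one hr0.le hq
  apply Summable.of_nat_of_neg
  · apply summable_of_ratio_norm_eventually_le (r := 1/2) (by norm_num)
    have hev : ∀ᶠ n : ℕ in atTop, ‖z‖ * (‖q‖ * ‖q‖ ^ n) ≤ 1/2 := by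
      have : Tendsto (fun n : ℕ => ‖z‖ * (‖q‖ * ‖q‖ ^ n)) atTop (𝓝 0) := by
        simpa using (htendq.const_mul ‖q‖).const_mul ‖z‖
      exact this.eventually_le_const (by norm_num)
    filter_upwards [hev] with n hn
    have hstep : u ((n:ℤ)+1) = u n * (‖z‖ * (‖q‖ * ‖q‖ ^ n)) := by
      simp only [hu]
      rw [tri_succ, zpow_add₀ hz0.ne', zpow_add₀ hr0.ne', zpow_add₀ hr0.ne']
      simp only [zpow_natCast, zpow_one]
      ring
    have hcast : ((n+1 : ℕ) : ℤ) = (n:ℤ)+1 := by push_cast; ring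
    rw [Real.norm_eq_abs, Real.norm_eq_abs, abs_of_pos (hupos _), abs_of_pos (hupos _),
      hcast, hstep]
    calc u n * (‖z‖ * (‖q‖ * ‖q‖ ^ n)) ≤ u n * (1/2) := by
          apply mul_le_mul_of_nonneg_left hn (hupos _).le
      _ = 1/2 * u n := by ring
  · apply summable_of_ratio_norm_eventually_le (r := 1/2) (by norm_num)
    have hev : ∀ᶠ n : ℕ in atTop, ‖z‖⁻¹ * ‖q‖ ^ n ≤ 1/2 := by
      have : Tendsto (fun n : ℕ => ‖z‖⁻¹ * ‖q‖ ^ n) atTop (𝓝 0) := by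
        simpa using htendq.const_mul ‖z‖⁻¹
      exact this.eventually_le_const (by norm_num)
    filter_upwards [hev] with n hn
    have hstep : u (-((n:ℤ)+1)) = u (-(n:ℤ)) * (‖z‖⁻¹ * ‖q‖ ^ n) := by
      simp only [hu]
      rw [tri_neg, zpow_add₀ hr0.ne',
        show -((n:ℤ)+1) = -(n:ℤ) + (-1) by ring, zpow_add₀ hz0.ne']
      simp only [zpow_natCast, zpow_neg_one]
      ring
    have hcast : -((n+1 : ℕ) : ℤ) = -((n:ℤ)+1) := by push_cast; ring
    rw [Real.norm_eq_abs, Real.norm_eq_abs, abs_of_pos (hupos _), abs_of_pos (hupos _),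
      hcast, hstep]
    calc u (-(n:ℤ)) * (‖z‖⁻¹ * ‖q‖ ^ n) ≤ u (-(n:ℤ)) * (1/2) := by
          apply mul_le_mul_of_nonneg_left hn (hupos _).le
      _ = 1/2 * u (-(n:ℤ)) := by ring

end JTP

namespace JTP

open Filter Topology

theorem main_ne (q z : ℂ) (hq : ‖q‖ < 1) (hq0 : q ≠ 0) (hz : z ≠ 0) :
    ∏' m : ℕ, ((1 + z * q ^ (m + 1)) * (1 + z⁻¹ * q ^ m) * (1 - q ^ (m + 1)))
      = ∑' j : ℤ, z ^ j * q ^ (j * (j + 1) / 2) := by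
  have hr0 : (0:ℝ) < ‖q‖ := norm_pos_iff.mpr hq0
  have hz0 : (0:ℝ) < ‖z‖ := norm_pos_iff.mpr hz
  set c := Real.exp (-(‖q‖ / (1 - ‖q‖) / (1 - ‖q‖))) with hc
  set Cb := Real.exp (‖q‖ / (1 - ‖q‖)) with hCb
  have hcpos : 0 < c := Real.exp_pos _
  have hCpos : 0 < Cb := Real.exp_pos _
  have hgeom : ∀ (a : ℂ) (d : ℕ), d ≠ 0 → Summable (fun m : ℕ => a * (q^d)^m) := by
    intro a d hd
    apply Summable.mul_left
    apply summable_geometric_of_norm_lt_one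
    rw [norm_pow]
    exact pow_lt_one₀ (norm_nonneg q) hq hd
  have hsumC : Summable (fun m : ℕ => (1 - q^(m+1)) - 1) := by
    refine (hgeom (-q) 1 one_ne_zero).congr fun m => ?_
    ring
  have hsumF : Summable (fun m : ℕ =>
      (1 + z * q ^ (m + 1)) * (1 + z⁻¹ * q ^ m) * (1 - q ^ (m + 1)) - 1) := by
    have h := ((((((hgeom (z*q) 1 one_ne_zero).add (hgeom z⁻¹ 1 one_ne_zero)).add
      (hgeom (-q) 1 one_ne_zero)).add (hgeom (z*z⁻¹*q) 2 two_ne_zero)).add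
      (hgeom (-(z*q^2)) 2 two_ne_zero)).add (hgeom (-(z⁻¹*q)) 2 two_ne_zero)).add
      (hgeom (-(z*z⁻¹*q^2)) 3 three_ne_zero)
    refine h.congr fun m => ?_
    ring
  set D := ∏' m : ℕ, (1 - q^(m+1)) with hD
  have htendD : Tendsto (fun n => dd q n) atTop (𝓝 D) := tendsto_partial_prods _ hsumC
  have hcD : c ≤ ‖D‖ := ge_of_tendsto htendD.norm (Eventually.of_forall (le_dd_norm hq))
  have hDne : D ≠ 0 := norm_pos_iff.mp (hcpos.trans_le hcD)
  have htendL : Tendsto (fun n => ∏ m ∈ range n,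
      ((1 + z * q ^ (m + 1)) * (1 + z⁻¹ * q ^ m) * (1 - q ^ (m + 1)))) atTop
      (𝓝 (∏' m : ℕ, ((1 + z * q ^ (m + 1)) * (1 + z⁻¹ * q ^ m) * (1 - q ^ (m + 1))))) :=
    tendsto_partial_prods _ hsumF
  set g : ℤ → ℂ := fun j => z^j * q^(j*(j+1)/2) with hg
  set fn : ℕ → ℤ → ℂ := fun n j =>
    (if j ∈ Finset.Icc (-(n:ℤ)) n then qb q (2*n) (j + n).toNat * z^j * q^(j*(j+1)/2) else 0)
      * dd q n with hfn
  have hi : ∀ n, ∑' j, fn n j = ∏ m ∈ range n,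
      ((1 + z * q ^ (m + 1)) * (1 + z⁻¹ * q ^ m) * (1 - q ^ (m + 1))) := by
    intro n
    rw [tsum_eq_sum (s := Finset.Icc (-(n:ℤ)) n)
      (by intro j hj; simp only [hfn]; rw [if_neg hj, zero_mul])]
    calc ∑ j ∈ Finset.Icc (-(n:ℤ)) n, fn n j
        = (∑ j ∈ Finset.Icc (-(n:ℤ)) n,
            qb q (2*n) (j + n).toNat * z^j * q^(j*(j+1)/2)) * dd q n := by
          rw [Finset.sum_mul]
          refine Finset.sum_congr rfl fun j hj => ?_
          simp only [hfn]
          rw [if_pos hj]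
      _ = (∏ m ∈ range n, ((1 + z * q ^ (m+1)) * (1 + z⁻¹ * q ^ m))) * dd q n := by
          rw [← finite_jacobi q z hq0 hz n]
      _ = ∏ m ∈ range n, ((1 + z * q ^ (m + 1)) * (1 + z⁻¹ * q ^ m) * (1 - q ^ (m + 1))) := by
          rw [dd, ← Finset.prod_mul_distrib]
  have hii : ∀ j : ℤ, Tendsto (fun n => fn n j) atTop (𝓝 (g j)) := by
    intro j
    have hev : ∀ᶠ n : ℕ in atTop, fn n j
        = dd q (2*n) * ((dd q ((j+n).toNat))⁻¹ * (dd q (2*n - (j+n).toNat))⁻¹)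
          * dd q n * (z^j * q^(j*(j+1)/2)) := by
      filter_upwards [eventually_ge_atTop j.natAbs] with n hn
      have hjmem : j ∈ Finset.Icc (-(n:ℤ)) n := by
        rw [Finset.mem_Icc]; omega
      simp only [hfn]
      rw [if_pos hjmem]
      have hk : (j + n).toNat ≤ 2*n := by omega
      have heq := qb_dd q (2*n) ((j+n).toNat) hk
      have h1 := dd_ne_zero (q := q) hq ((j+n).toNat)
      have h2 := dd_ne_zero (q := q) hq (2*n - (j+n).toNat)
      have hqb : qb q (2*n) ((j+n).toNat)
          = dd q (2*n) * ((dd q ((j+n).toNat))⁻¹ * (dd q (2*n - (j+n).toNat))⁻¹) := by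
        field_simp
        linear_combination heq
      rw [hqb]
      ring
    have hmono : ∀ (φ : ℕ → ℕ), (∀ b, ∃ N, ∀ n ≥ N, b ≤ φ n) →
        Tendsto (fun n => dd q (φ n)) atTop (𝓝 D) :=
      fun φ hφ => htendD.comp (tendsto_atTop_atTop.mpr fun b => (hφ b).imp fun N hN => hN)
    have ht1 : Tendsto (fun n : ℕ => dd q (2*n)) atTop (𝓝 D) :=
      hmono _ (fun b => ⟨b, fun n hn => by omega⟩)
    have ht2 : Tendsto (fun n : ℕ => dd q ((j+n).toNat)) atTop (𝓝 D) :=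
      hmono _ (fun b => ⟨b + j.natAbs, fun n hn => by omega⟩)
    have ht3 : Tendsto (fun n : ℕ => dd q (2*n - (j+n).toNat)) atTop (𝓝 D) :=
      hmono _ (fun b => ⟨b + j.natAbs, fun n hn => by omega⟩)
    have hlim : Tendsto (fun n => dd q (2*n) * ((dd q ((j+n).toNat))⁻¹
        * (dd q (2*n - (j+n).toNat))⁻¹) * dd q n * (z^j * q^(j*(j+1)/2))) atTop
        (𝓝 (D * (D⁻¹ * D⁻¹) * D * (z^j * q^(j*(j+1)/2)))) :=
      (((ht1.mul ((ht2.inv₀ hDne).mul (ht3.inv₀ hDne))).mul htendD).mul tendsto_const_nhds)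
    have hval : D * (D⁻¹ * D⁻¹) * D * (z^j * q^(j*(j+1)/2)) = g j := by
      simp only [hg]
      field_simp
    rw [hval] at hlim
    exact Tendsto.congr' (hev.mono fun n h => h.symm) hlim
  set K := Cb * (Cb / (c*c)) with hK
  have hbound : ∀ n, ∀ j, ‖fn n j‖ ≤ K * (‖z‖^j * ‖q‖^(j*(j+1)/2)) := by
    intro n j
    by_cases hj : j ∈ Finset.Icc (-(n:ℤ)) n
    · simp only [hfn]
      rw [if_pos hj]
      rw [Finset.mem_Icc] at hj
      have hk : (j + n).toNat ≤ 2*n := by omega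
      have hqbnorm : ‖qb q (2*n) ((j+n).toNat)‖ ≤ Cb / (c*c) := by
        have heq := qb_dd q (2*n) ((j+n).toNat) hk
        have h1 := le_dd_norm (q := q) hq ((j+n).toNat)
        have h2 := le_dd_norm (q := q) hq (2*n - (j+n).toNat)
        have h3 := dd_norm_le (q := q) hq (2*n)
        have h4 : ‖qb q (2*n) ((j+n).toNat)‖
            * (‖dd q ((j+n).toNat)‖ * ‖dd q (2*n - (j+n).toNat)‖) = ‖dd q (2*n)‖ := by
          rw [← norm_mul, ← norm_mul, heq]
        rw [← hc] at h1 h2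
        rw [← hCb] at h3
        rw [le_div_iff₀ (by positivity)]
        have hA := norm_nonneg (qb q (2*n) ((j+n).toNat))
        have hcc : c * c ≤ ‖dd q ((j+n).toNat)‖ * ‖dd q (2*n - (j+n).toNat)‖ :=
          mul_le_mul h1 h2 hcpos.le (norm_nonneg _)
        calc ‖qb q (2*n) ((j+n).toNat)‖ * (c*c)
            ≤ ‖qb q (2*n) ((j+n).toNat)‖
              * (‖dd q ((j+n).toNat)‖ * ‖dd q (2*n - (j+n).toNat)‖) :=
              mul_le_mul_of_nonneg_left hcc hA
          _ = ‖dd q (2*n)‖ := h4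
          _ ≤ Cb := h3
      calc ‖qb q (2*n) ((j+n).toNat) * z^j * q^(j*(j+1)/2) * dd q n‖
          = ‖qb q (2*n) ((j+n).toNat)‖ * ‖z‖^j * ‖q‖^(j*(j+1)/2) * ‖dd q n‖ := by
            rw [norm_mul, norm_mul, norm_mul, norm_zpow, norm_zpow]
        _ ≤ (Cb / (c*c)) * ‖z‖^j * ‖q‖^(j*(j+1)/2) * Cb := by
            have hz1 : (0:ℝ) ≤ ‖z‖^j := (zpow_pos hz0 _).le
            have hq1 : (0:ℝ) ≤ ‖q‖^(j*(j+1)/2) := (zpow_pos hr0 _).le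
            have := dd_norm_le (q := q) hq n
            gcongr
        _ = K * (‖z‖^j * ‖q‖^(j*(j+1)/2)) := by rw [hK]; ring
    · simp only [hfn]
      rw [if_neg hj, zero_mul, norm_zero]
      positivity
  have hdom := tendsto_tsum_of_dominated_convergence (𝓕 := atTop)
    (f := fun n j => fn n j) (g := g)
    (bound := fun j => K * (‖z‖^j * ‖q‖^(j*(j+1)/2)))
    (summable_bound hq hq0 hz K) hii (Eventually.of_forall fun n => hbound n)
  have h2 : Tendsto (fun n => ∑' j, fn n j) atTop
      (𝓝 (∏' m : ℕ, ((1 + z * q ^ (m + 1)) * (1 + z⁻¹ * q ^ m) * (1 - q ^ (m + 1))))) :=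
    htendL.congr (fun n => (hi n).symm)
  exact tendsto_nhds_unique h2 hdom

end JTP

/-- The Jacobi triple product identity: for `|q| < 1` and `z ≠ 0`,
`∏_{n=1}^∞ (1 + z q^n)(1 + z⁻¹ q^{n-1})(1 - q^n) = ∑_{j ∈ ℤ} z^j q^{binom(j+1,2)}`,
where `binom(j+1,2) = j(j+1)/2`. -/
theorem stmt_5 (q z : ℂ) (hq : ‖q‖ < 1) (hz : z ≠ 0) :
    ∏' m : ℕ, ((1 + z * q ^ (m + 1)) * (1 + z⁻¹ * q ^ m) * (1 - q ^ (m + 1)))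
      = ∑' j : ℤ, z ^ j * q ^ (j * (j + 1) / 2) := by
  by_cases hq0 : q = 0
  · subst hq0
    have hL : ∏' m : ℕ, ((1 + z * (0:ℂ) ^ (m + 1)) * (1 + z⁻¹ * (0:ℂ) ^ m)
        * (1 - (0:ℂ) ^ (m + 1))) = 1 + z⁻¹ := by
      rw [tprod_eq_prod (s := ({0} : Finset ℕ)) ?h1]
      · rw [Finset.prod_singleton]
        norm_num
      · intro m hm
        have hm0 : m ≠ 0 := by simpa using hm
        rw [zero_pow (Nat.succ_ne_zero m), zero_pow hm0]
        ring
    have hR : ∑' j : ℤ, z ^ j * (0:ℂ) ^ (j * (j + 1) / 2) = 1 + z⁻¹ := by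
      rw [tsum_eq_sum (s := ({0, -1} : Finset ℤ)) ?h2]
      · rw [Finset.sum_pair (by decide : (0:ℤ) ≠ -1)]
        norm_num
      · intro j hj
        simp only [Finset.mem_insert, Finset.mem_singleton] at hj
        push_neg at hj
        have hne : j * (j + 1) / 2 ≠ 0 := by
          obtain ⟨a, ha⟩ := Int.even_mul_succ_self j
          have hprod : j * (j + 1) ≠ 0 := mul_ne_zero hj.1 (by omega)
          rw [ha] at hprod ⊢
          omega
        rw [zero_zpow _ hne, mul_zero]
    rw [hL, hR]
  · exact JTP.main_ne q z hq hq0 hz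
end

section
/- Let H₁, H₂ be sets of finite sequences of nonnegative integers and let P_{H₁,H₂}(k) denote the number of generalized Frobenius partitions of k with top row in H₁ and bottom row in H₂. Then ∑_{k≥0} P_{H₁,H₂}(k) q^k = [z⁰] (∑_{k,d} P_{H₁}(k,d) q^k (zq)^d)(∑_{k,d} P_{H₂}(k,d) q^k z^{-d}), where [z⁰] extracts the coefficient of z⁰. -/
/-- `P_H(k, d)`: the number of sequences in `H` of length `d` summing to `k`. -/
noncomputable def PH (H : Set (List ℕ)) (k d : ℕ) : ℕ :=
  Nat.card {l : List ℕ // l ∈ H ∧ l.length = d ∧ l.sum = k}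

/-- `P_{H₁,H₂}(k)`: the number of generalized Frobenius partitions of `k`
with top row in `H₁` and bottom row in `H₂`; a generalized Frobenius partition
of `k` is a pair of rows of equal length `d` with `k = d + ∑ fᵢ + ∑ gᵢ`. -/
noncomputable def PHH (H₁ H₂ : Set (List ℕ)) (k : ℕ) : ℕ :=
  Nat.card {pr : List ℕ × List ℕ //
    pr.1 ∈ H₁ ∧ pr.2 ∈ H₂ ∧ pr.1.length = pr.2.length ∧
    pr.1.length + pr.1.sum + pr.2.sum = k}

-- finiteness of lists with fixed length and sum
instance finite_aux (H : Set (List ℕ)) (k d : ℕ) :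
    Finite {l : List ℕ // l ∈ H ∧ l.length = d ∧ l.sum = k} := by
  have key : ∀ (l : List ℕ), l.sum = k → ∀ i, (hi : i < l.length) → l[i] ≤ k := by
    intro l hl i hi
    exact hl ▸ List.single_le_sum (fun _ _ => Nat.zero_le _) _ (List.getElem_mem hi)
  apply Finite.of_injective
    (fun l : {l : List ℕ // l ∈ H ∧ l.length = d ∧ l.sum = k} =>
      (fun i : Fin d => (⟨min (l.1.getD i 0) k, by omega⟩ : Fin (k + 1))))
  intro A B h
  have hlen : A.1.length = B.1.length := by rw [A.2.2.1, B.2.2.1]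
  refine Subtype.ext (List.ext_getElem hlen fun i h1 h2 => ?_)
  have h' : min (A.1.getD i 0) k = min (B.1.getD i 0) k :=
    congrArg Fin.val (congrFun h ⟨i, A.2.2.1 ▸ h1⟩)
  have e1 : A.1.getD i 0 = A.1[i] := List.getD_eq_getElem _ 0 h1
  have e2 : B.1.getD i 0 = B.1[i] := List.getD_eq_getElem _ 0 h2
  have k1 := key A.1 A.2.2.2 i h1
  have k2 := key B.1 B.2.2.2 i h2
  omega

lemma natCard_sigma {ι : Type*} [Fintype ι] (f : ι → Type*) [∀ i, Finite (f i)] :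
    Nat.card (Σ i, f i) = ∑ i, Nat.card (f i) := by
  letI : ∀ i, Fintype (f i) := fun i => Fintype.ofFinite _
  simp [Nat.card_eq_fintype_card, Fintype.card_sigma]

/-- Andrews' product formula for generalized Frobenius partitions:
`∑_k P_{H₁,H₂}(k) q^k = [z⁰] (∑_{k,d} P_{H₁}(k,d) q^k (zq)^d)(∑_{k,d} P_{H₂}(k,d) q^k z^{-d})`.
Extracting the coefficient of `z⁰ q^k` in the product on the right pairs equal
values of `d` and splits `k = d + a + b`, so the identity reads, coefficient-wise:
`P_{H₁,H₂}(k) = ∑_{d+a+b=k} P_{H₁}(a,d) · P_{H₂}(b,d)`. -/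
theorem stmt_8 (H₁ H₂ : Set (List ℕ)) (k : ℕ) :
    PHH H₁ H₂ k
      = ∑ t ∈ Finset.Nat.antidiagonalTuple 3 k, PH H₁ (t 1) (t 0) * PH H₂ (t 2) (t 0) := by
  classical
  have e : {pr : List ℕ × List ℕ //
      pr.1 ∈ H₁ ∧ pr.2 ∈ H₂ ∧ pr.1.length = pr.2.length ∧
      pr.1.length + pr.1.sum + pr.2.sum = k} ≃
      Σ t : (Finset.Nat.antidiagonalTuple 3 k),
        ({l : List ℕ // l ∈ H₁ ∧ l.length = (t : Fin 3 → ℕ) 0 ∧ l.sum = (t : Fin 3 → ℕ) 1} ×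
         {l : List ℕ // l ∈ H₂ ∧ l.length = (t : Fin 3 → ℕ) 0 ∧ l.sum = (t : Fin 3 → ℕ) 2}) := by
    refine
      { toFun := fun pr => ⟨⟨![pr.1.1.length, pr.1.1.sum, pr.1.2.sum], ?_⟩,
          ⟨⟨pr.1.1, pr.2.1, by simp, by simp⟩, ⟨pr.1.2, pr.2.2.1, by simp [pr.2.2.2.1.symm], by simp⟩⟩⟩
        invFun := fun x => ⟨(x.2.1.1, x.2.2.1), x.2.1.2.1, x.2.2.2.1, ?_, ?_⟩
        left_inv := ?_
        right_inv := ?_ }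
    · rw [Finset.Nat.mem_antidiagonalTuple, Fin.sum_univ_three]
      simpa using pr.2.2.2.2
    · rw [x.2.1.2.2.1, x.2.2.2.2.1]
    · have := (x.1 : { t // t ∈ Finset.Nat.antidiagonalTuple 3 k}).2
      rw [Finset.Nat.mem_antidiagonalTuple, Fin.sum_univ_three] at this
      rw [x.2.1.2.2.1, x.2.1.2.2.2, x.2.2.2.2.2]
      exact this
    · rintro ⟨⟨a, b⟩, h⟩; rfl
    · rintro ⟨⟨t, ht⟩, ⟨x, hx⟩, ⟨y, hy⟩⟩
      have htt : t = ![x.length, x.sum, y.sum] := by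
        funext i; fin_cases i
        · simpa using hx.2.1.symm
        · simpa using hx.2.2.symm
        · simpa using hy.2.2.symm
      subst htt
      rfl
  rw [PHH, Nat.card_congr e]
  rw [natCard_sigma]
  rw [← Finset.sum_coe_sort (Finset.Nat.antidiagonalTuple 3 k)
    (fun t => PH H₁ (t 1) (t 0) * PH H₂ (t 2) (t 0))]
  exact Finset.sum_congr rfl fun t _ => by rw [Nat.card_prod]; rfl
end

section
/- Let C be the Cartan matrix of type D_n (n ≥ 4) and Q(m) = mᵀCm the associated quadratic form. Under the explicit change of coordinates (z_1,...,z_n) ↦ (m_1,...,m_n) given by m_1 = -b_{1..n-2} - c_{1..n-2}(z_{n-1}+z_n), m_i = -2a_{1..i-1} + c_{1..i-1}b_{i..n-2} - c_{1..n-2}(z_{n-1}+z_n) for 2 ≤ i ≤ n-2, m_{n-1} = -a_{1..n-2} - c_{1..n-2}z_{n-1}, m_n = -a_{1..n-2} - c_{1..n-2}z_n (where for I ⊆ {1,...,n-2}, z_I = ∑_{i∈I} z_i = 2a_I - b_I with b_I ∈ {0,1}, c_I = 2b_I - 1), this map ℤ^n → ℤ^n is a bijection. -/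
/-- `b(z) ∈ {0,1}`: the parity of `z`, so that `z = 2a(z) - b(z)`. -/
def intb (z : ℤ) : ℤ := if Odd z then 1 else 0

/-- `a(z) = (z + b(z))/2`, so that `z = 2a(z) - b(z)` with `b(z) ∈ {0,1}`. -/
def inta (z : ℤ) : ℤ := (z + intb z) / 2

/-- `c(z) = 2b(z) - 1 ∈ {-1, 1}`. -/
def intc (z : ℤ) : ℤ := 2 * intb z - 1

/-- The partial sum `z_{i..j} = ∑_{i ≤ t ≤ j} z_t` (1-based indices). -/
def psum (n : ℕ) (z : Fin n → ℤ) (i j : ℕ) : ℤ :=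
  ∑ t ∈ Finset.univ.filter (fun t : Fin n => i ≤ (t : ℕ) + 1 ∧ (t : ℕ) + 1 ≤ j), z t

/-- The type `D_n` change of coordinates `(z_1,…,z_n) ↦ (m_1,…,m_n)`:
`m_1 = -b_{1..n-2} - c_{1..n-2}(z_{n-1}+z_n)`,
`m_i = -2a_{1..i-1} + c_{1..i-1} b_{i..n-2} - c_{1..n-2}(z_{n-1}+z_n)` for `2 ≤ i ≤ n-2`,
`m_{n-1} = -a_{1..n-2} - c_{1..n-2} z_{n-1}`, `m_n = -a_{1..n-2} - c_{1..n-2} z_n`,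
where `z_I = 2a_I - b_I` with `b_I ∈ {0,1}` and `c_I = 2b_I - 1`.
(0-based index `k` corresponds to `m_{k+1}`.) -/
def Dmap (n : ℕ) (z : Fin n → ℤ) : Fin n → ℤ := fun k =>
  if (k : ℕ) = 0 then
    -intb (psum n z 1 (n - 2)) -
      intc (psum n z 1 (n - 2)) * (psum n z (n - 1) (n - 1) + psum n z n n)
  else if (k : ℕ) ≤ n - 3 then
    -2 * inta (psum n z 1 (k : ℕ)) +
      intc (psum n z 1 (k : ℕ)) * intb (psum n z ((k : ℕ) + 1) (n - 2)) -
      intc (psum n z 1 (n - 2)) * (psum n z (n - 1) (n - 1) + psum n z n n)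
  else if (k : ℕ) = n - 2 then
    -inta (psum n z 1 (n - 2)) - intc (psum n z 1 (n - 2)) * psum n z (n - 1) (n - 1)
  else
    -inta (psum n z 1 (n - 2)) - intc (psum n z 1 (n - 2)) * psum n z n n

def zz (n : ℕ) (z : Fin n → ℤ) : ℕ → ℤ := fun i => if h : i < n then z ⟨i, h⟩ else 0

def Dinv (n : ℕ) (m : Fin n → ℤ) : Fin n → ℤ := fun k =>
  if (k : ℕ) + 1 ≤ n - 2 then
    (if (k : ℕ) + 1 ≤ n - 3 then zz n m 0 - zz n m ((k : ℕ) + 1)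
      else zz n m 0 - zz n m (n - 2) - zz n m (n - 1)) -
    (if (k : ℕ) = 0 then 0 else zz n m 0 - zz n m (k : ℕ))
  else if (k : ℕ) = n - 2 then
    -intc (zz n m 0 - zz n m (n - 2) - zz n m (n - 1)) *
      (zz n m (n - 2) + inta (zz n m 0 - zz n m (n - 2) - zz n m (n - 1)))
  else
    -intc (zz n m 0 - zz n m (n - 2) - zz n m (n - 1)) *
      (zz n m (n - 1) + inta (zz n m 0 - zz n m (n - 2) - zz n m (n - 1)))

-- evaluation lemmas for zz ∘ Dmap
lemma intb_emod (x : ℤ) : intb x = x % 2 := by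
  rcases Int.emod_two_eq x with h | h <;> rw [intb, h] <;> simp [Int.odd_iff, h]

lemma inta_emod (x : ℤ) : inta x = (x + x % 2) / 2 := by rw [inta, intb_emod]

lemma intc_emod (x : ℤ) : intc x = 2 * (x % 2) - 1 := by rw [intc, intb_emod]

lemma intc_mul_self (x : ℤ) : intc x * intc x = 1 := by
  rw [intc_emod]; have := Int.emod_two_eq x; rcases this with h | h <;> rw [h] <;> norm_num

lemma two_inta (x : ℤ) : 2 * inta x = x + intb x := by
  rw [inta_emod, intb_emod]; omega

lemma key_id (x y : ℤ) : -2 * inta x + intc x * intb (y - x) = -x - intb y := by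
  rw [inta_emod, intc_emod, intb_emod, intb_emod]
  rcases Int.emod_two_eq x with h | h <;> rw [h] <;> ring_nf <;> omega

lemma psum_eq_Ico (n : ℕ) (z : Fin n → ℤ) {i j : ℕ} (hj : j ≤ n) :
    psum n z i j = ∑ t ∈ Finset.Ico (i - 1) j, zz n z t := by
  have hfil : Finset.Ico (i-1) j = (Finset.range n).filter (fun t => i ≤ t + 1 ∧ t + 1 ≤ j) := by
    ext t; simp only [Finset.mem_Ico, Finset.mem_filter, Finset.mem_range]; omega
  rw [hfil, Finset.sum_filter, psum, Finset.sum_filter,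
      ← Fin.sum_univ_eq_sum_range (fun t => if i ≤ t + 1 ∧ t + 1 ≤ j then zz n z t else 0) n]
  refine Finset.sum_congr rfl fun t _ => ?_
  simp only [zz, dif_pos t.isLt, Fin.eta]

lemma psum_one (n : ℕ) (z : Fin n → ℤ) {j : ℕ} (hj : j ≤ n) :
    psum n z 1 j = ∑ t ∈ Finset.range j, zz n z t := by
  rw [psum_eq_Ico n z hj, show (1:ℕ)-1 = 0 from rfl, ← Finset.range_eq_Ico]

lemma psum_self (n : ℕ) (z : Fin n → ℤ) {j : ℕ} (h1 : 1 ≤ j) (hj : j ≤ n) :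
    psum n z j j = zz n z (j - 1) := by
  rw [psum_eq_Ico n z hj,
    show Finset.Ico (j-1) j = {j-1} by ext t; simp only [Finset.mem_Ico, Finset.mem_singleton]; omega,
    Finset.sum_singleton]

lemma psum_split (n : ℕ) (z : Fin n → ℤ) {i j : ℕ} (hij : i ≤ j) (hj : j ≤ n) :
    psum n z 1 i + psum n z (i + 1) j = psum n z 1 j := by
  rw [psum_eq_Ico n z (le_trans hij hj), psum_eq_Ico n z hj, psum_eq_Ico n z hj,
    show (1:ℕ)-1 = 0 from rfl, Nat.add_sub_cancel]
  exact Finset.sum_Ico_consecutive _ (Nat.zero_le i) hij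
-- evaluation lemmas for zz ∘ Dmap
lemma zz_Dmap_zero (n : ℕ) (hn : 4 ≤ n) (z : Fin n → ℤ) :
    zz n (Dmap n z) 0 = -intb (psum n z 1 (n - 2)) -
      intc (psum n z 1 (n - 2)) * (psum n z (n - 1) (n - 1) + psum n z n n) := by
  have h0 : 0 < n := by omega
  simp only [zz, dif_pos h0, Dmap, Fin.val_mk]
  norm_num

lemma zz_Dmap_mid (n : ℕ) (hn : 4 ≤ n) (z : Fin n → ℤ) (i : ℕ) (h1 : 1 ≤ i) (h2 : i ≤ n - 3) :
    zz n (Dmap n z) i = -2 * inta (psum n z 1 i) +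
      intc (psum n z 1 i) * intb (psum n z (i + 1) (n - 2)) -
      intc (psum n z 1 (n - 2)) * (psum n z (n - 1) (n - 1) + psum n z n n) := by
  have h0 : i < n := by omega
  simp only [zz, dif_pos h0, Dmap, Fin.val_mk]
  rw [if_neg (by omega), if_pos (by omega)]

lemma zz_Dmap_pen (n : ℕ) (hn : 4 ≤ n) (z : Fin n → ℤ) :
    zz n (Dmap n z) (n - 2) = -inta (psum n z 1 (n - 2)) -
      intc (psum n z 1 (n - 2)) * psum n z (n - 1) (n - 1) := by
  have h0 : n - 2 < n := by omega
  simp only [zz, dif_pos h0, Dmap, Fin.val_mk]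
  rw [if_neg (by omega), if_neg (by omega)]
  rw [if_pos trivial]

lemma zz_Dmap_last (n : ℕ) (hn : 4 ≤ n) (z : Fin n → ℤ) :
    zz n (Dmap n z) (n - 1) = -inta (psum n z 1 (n - 2)) -
      intc (psum n z 1 (n - 2)) * psum n z n n := by
  have h0 : n - 1 < n := by omega
  simp only [zz, dif_pos h0, Dmap, Fin.val_mk]
  rw [if_neg (by omega), if_neg (by omega), if_neg (by omega)]

lemma left_inv (n : ℕ) (hn : 4 ≤ n) (z : Fin n → ℤ) : Dinv n (Dmap n z) = z := by
  funext k
  set S2 := psum n z 1 (n - 2) with hS2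
  set W := psum n z (n - 1) (n - 1) with hW
  set V := psum n z n n with hV
  have hc : intc S2 * (W + V) = intc S2 * W + intc S2 * V := by ring
  have h2a := two_inta S2
  have hSl : zz n (Dmap n z) 0 - zz n (Dmap n z) (n - 2) - zz n (Dmap n z) (n - 1) = S2 := by
    rw [zz_Dmap_zero n hn z, zz_Dmap_pen n hn z, zz_Dmap_last n hn z]
    linarith
  have hSi : ∀ i, 1 ≤ i → i ≤ n - 3 →
      zz n (Dmap n z) 0 - zz n (Dmap n z) i = psum n z 1 i := by
    intro i h1 h2
    rw [zz_Dmap_zero n hn z, zz_Dmap_mid n hn z i h1 h2]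
    have hsp : psum n z (i + 1) (n - 2) = S2 - psum n z 1 i := by
      have := psum_split n z (show i ≤ n - 2 by omega) (show n - 2 ≤ n by omega)
      linarith
    rw [hsp]
    have hk := key_id (psum n z 1 i) S2
    linarith
  have hzk : zz n z (k : ℕ) = z k := by simp only [zz, dif_pos k.isLt, Fin.eta]
  simp only [Dinv]
  by_cases hk1 : (k : ℕ) + 1 ≤ n - 2
  · rw [if_pos hk1]
    have e1 : (if (k : ℕ) + 1 ≤ n - 3 then zz n (Dmap n z) 0 - zz n (Dmap n z) ((k : ℕ) + 1)
        else zz n (Dmap n z) 0 - zz n (Dmap n z) (n - 2) - zz n (Dmap n z) (n - 1)) =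
        psum n z 1 ((k : ℕ) + 1) := by
      split_ifs with h
      · exact hSi _ (by omega) h
      · have hkk : (k : ℕ) + 1 = n - 2 := by omega
        rw [hkk]
        exact hSl
    have e2 : (if (k : ℕ) = 0 then 0 else zz n (Dmap n z) 0 - zz n (Dmap n z) (k : ℕ)) =
        psum n z 1 (k : ℕ) := by
      split_ifs with h
      · rw [h, psum_one n z (by omega)]
        simp
      · exact hSi _ (by omega) (by omega)
    rw [e1, e2, psum_one n z (by omega), psum_one n z (by omega), Finset.sum_range_succ, hzk]
    ring
  · rw [if_neg hk1]
    split_ifs with h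
    · rw [hSl, zz_Dmap_pen n hn z]
      have hWz : W = z k := by
        rw [hW, psum_self n z (by omega) (by omega), show n - 1 - 1 = (k : ℕ) by omega, hzk]
      rw [← hWz]
      linear_combination W * intc_mul_self S2
    · have hkv : (k : ℕ) = n - 1 := by have := k.isLt; omega
      rw [hSl, zz_Dmap_last n hn z]
      have hVz : V = z k := by
        rw [hV, psum_self n z (by omega) (by omega), show n - 1 = (k : ℕ) by omega, hzk]
      rw [← hVz]
      linear_combination V * intc_mul_self S2

lemma zz_eval (n : ℕ) (f : Fin n → ℤ) (i : ℕ) (h : i < n) : zz n f i = f ⟨i, h⟩ := by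
  simp only [zz, dif_pos h]

lemma zz_Dinv_low (n : ℕ) (hn : 4 ≤ n) (m : Fin n → ℤ) (t : ℕ) (ht : t + 1 ≤ n - 2) :
    zz n (Dinv n m) t =
      (if t + 1 ≤ n - 3 then zz n m 0 - zz n m (t + 1)
        else zz n m 0 - zz n m (n - 2) - zz n m (n - 1)) -
      (if t = 0 then 0 else zz n m 0 - zz n m t) := by
  have h0 : t < n := by omega
  rw [zz_eval n (Dinv n m) t h0]
  simp only [Dinv, Fin.val_mk]
  rw [if_pos ht]

lemma zz_Dinv_pen (n : ℕ) (hn : 4 ≤ n) (m : Fin n → ℤ) :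
    zz n (Dinv n m) (n - 2) = -intc (zz n m 0 - zz n m (n - 2) - zz n m (n - 1)) *
      (zz n m (n - 2) + inta (zz n m 0 - zz n m (n - 2) - zz n m (n - 1))) := by
  have h0 : n - 2 < n := by omega
  rw [zz_eval n (Dinv n m) (n - 2) h0]
  simp only [Dinv, Fin.val_mk]
  rw [if_neg (by omega), if_pos trivial]

lemma zz_Dinv_last (n : ℕ) (hn : 4 ≤ n) (m : Fin n → ℤ) :
    zz n (Dinv n m) (n - 1) = -intc (zz n m 0 - zz n m (n - 2) - zz n m (n - 1)) *
      (zz n m (n - 1) + inta (zz n m 0 - zz n m (n - 2) - zz n m (n - 1))) := by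
  have h0 : n - 1 < n := by omega
  rw [zz_eval n (Dinv n m) (n - 1) h0]
  simp only [Dinv, Fin.val_mk]
  rw [if_neg (by omega), if_neg (by omega)]

lemma psum_Dinv (n : ℕ) (hn : 4 ≤ n) (m : Fin n → ℤ) (j : ℕ) (hj : j ≤ n - 2) :
    psum n (Dinv n m) 1 j =
      if j = 0 then 0 else if j ≤ n - 3 then zz n m 0 - zz n m j
      else zz n m 0 - zz n m (n - 2) - zz n m (n - 1) := by
  set S : ℕ → ℤ := fun i => if i = 0 then 0 else if i ≤ n - 3 then zz n m 0 - zz n m i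
      else zz n m 0 - zz n m (n - 2) - zz n m (n - 1) with hS
  rw [psum_one n (Dinv n m) (by omega)]
  have step : ∀ t, t < j → zz n (Dinv n m) t = S (t + 1) - S t := by
    intro t ht
    rw [zz_Dinv_low n hn m t (by omega), hS]
    simp only
    split_ifs <;> first | ring1 | omega | contradiction
  rw [Finset.sum_congr rfl (fun t ht => step t (Finset.mem_range.mp ht)),
    Finset.sum_range_sub S j]
  have hS0 : S 0 = 0 := by rw [hS]; simp
  rw [hS0, sub_zero]

lemma right_inv (n : ℕ) (hn : 4 ≤ n) (m : Fin n → ℤ) : Dmap n (Dinv n m) = m := by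
  funext k
  have hmk : zz n m (k : ℕ) = m k := by simp only [zz, dif_pos k.isLt, Fin.eta]
  have hS2 : psum n (Dinv n m) 1 (n - 2) = (zz n m 0 - zz n m (n - 2) - zz n m (n - 1)) := by
    rw [psum_Dinv n hn m (n - 2) le_rfl, if_neg (by omega), if_neg (by omega)]
  have hW : psum n (Dinv n m) (n - 1) (n - 1) =
      -intc (zz n m 0 - zz n m (n - 2) - zz n m (n - 1)) * (zz n m (n - 2) + inta (zz n m 0 - zz n m (n - 2) - zz n m (n - 1))) := by
    rw [psum_self n (Dinv n m) (by omega) (by omega), show n - 1 - 1 = n - 2 by omega,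
      zz_Dinv_pen n hn m]
  have hV : psum n (Dinv n m) n n =
      -intc (zz n m 0 - zz n m (n - 2) - zz n m (n - 1)) * (zz n m (n - 1) + inta (zz n m 0 - zz n m (n - 2) - zz n m (n - 1))) := by
    rw [psum_self n (Dinv n m) (by omega) le_rfl, zz_Dinv_last n hn m]
  simp only [Dmap]
  split_ifs with h0 h1 h2
  · rw [hS2, hW, hV, ← hmk, h0]
    linear_combination (zz n m (n - 2) + zz n m (n - 1) + 2 * inta (zz n m 0 - zz n m (n - 2) - zz n m (n - 1))) * intc_mul_self (zz n m 0 - zz n m (n - 2) - zz n m (n - 1)) + two_inta (zz n m 0 - zz n m (n - 2) - zz n m (n - 1))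
  · have hSk : psum n (Dinv n m) 1 (k : ℕ) = zz n m 0 - zz n m (k : ℕ) := by
      rw [psum_Dinv n hn m (k : ℕ) (by omega), if_neg h0, if_pos h1]
    have hsp : psum n (Dinv n m) ((k : ℕ) + 1) (n - 2) =
        (zz n m 0 - zz n m (n - 2) - zz n m (n - 1)) - (zz n m 0 - zz n m (k : ℕ)) := by
      have h := psum_split n (Dinv n m) (show (k : ℕ) ≤ n - 2 by omega)
        (show n - 2 ≤ n by omega)
      rw [hSk, hS2] at h
      linarith
    rw [hS2, hW, hV, hSk, hsp]
    rw [← hmk]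
    linear_combination key_id (zz n m 0 - zz n m (k : ℕ)) (zz n m 0 - zz n m (n - 2) - zz n m (n - 1)) +
      (zz n m (n - 2) + zz n m (n - 1) + 2 * inta (zz n m 0 - zz n m (n - 2) - zz n m (n - 1))) * intc_mul_self (zz n m 0 - zz n m (n - 2) - zz n m (n - 1)) + two_inta (zz n m 0 - zz n m (n - 2) - zz n m (n - 1))
  · rw [hS2, hW, ← hmk, h2]
    linear_combination (zz n m (n - 2) + inta (zz n m 0 - zz n m (n - 2) - zz n m (n - 1))) * intc_mul_self (zz n m 0 - zz n m (n - 2) - zz n m (n - 1))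
  · have hkv : (k : ℕ) = n - 1 := by have := k.isLt; omega
    rw [hS2, hV, ← hmk, hkv]
    linear_combination (zz n m (n - 1) + inta (zz n m 0 - zz n m (n - 2) - zz n m (n - 1))) * intc_mul_self (zz n m 0 - zz n m (n - 2) - zz n m (n - 1))

/-- The explicit type `D_n` change of coordinates `ℤ^n → ℤ^n`, `z ↦ m`, is a bijection. -/
theorem stmt_15 (n : ℕ) (hn : 4 ≤ n) : Function.Bijective (Dmap n) := by
  exact Function.bijective_iff_has_inverse.mpr
    ⟨Dinv n, fun z => left_inv n hn z, fun m => right_inv n hn m⟩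
end
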